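/- Fix a vector q ∈ ℝ^d, a learning rate η > 0, and a point x_t ∈ ℝ^d. Let ℓ̂ : ℝ → ℝ be continuously differentiable with ℓ̂' Lipschitz continuous, and let s : [0,1] → ℝ be the (unique) solution of s(0) = 0, s'(h) = η ℓ̂'(⟨q, x_t − s(h) q⟩). For each N ∈ ℕ define the iterates x_0^{(N)} = x_t and x_{k+1}^{(N)} = x_k^{(N)} − (η/N) ℓ̂'(⟨q, x_k^{(N)}⟩) q for k = 0,…,N−1. Then lim_{N→∞} x_N^{(N)} = x_t − s(1) q. -/

import Mathlib

open scoped RealInnerProductSpace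

/-- Euler iterates for the 1-D ODE `c' = f c`, step size `h`, started at `0`. -/
def eulerSeq (f : ℝ → ℝ) (h : ℝ) : ℕ → ℝ
  | 0 => 0
  | k + 1 => eulerSeq f h k + h * f (eulerSeq f h k)

/-- Error bound for Euler's method. -/
lemma euler_error (f : ℝ → ℝ) (L M : ℝ) (hL : 0 ≤ L) (hM : 0 ≤ M)
    (hf : ∀ x y : ℝ, |f x - f y| ≤ L * |x - y|)
    (s : ℝ → ℝ) (hs0 : s 0 = 0)
    (hs : ∀ h ∈ Set.Icc (0 : ℝ) 1, HasDerivAt s (f (s h)) h)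
    (hMb : ∀ h ∈ Set.Icc (0 : ℝ) 1, |f (s h)| ≤ M)
    (N : ℕ) (hN : 1 ≤ N) :
    ∀ k ≤ N, |eulerSeq f (1 / N) k - s (k / N)| ≤
      k * (L * M / (N : ℝ) ^ 2) * (1 + L / N) ^ k := by
  have hNpos : (0 : ℝ) < N := by exact_mod_cast hN
  -- s is M-Lipschitz on [0,1]
  have hsLip : ∀ u ∈ Set.Icc (0 : ℝ) 1, ∀ v ∈ Set.Icc (0 : ℝ) 1,
      |s u - s v| ≤ M * |u - v| := by
    intro u hu v hv
    have := Convex.norm_image_sub_le_of_norm_hasDerivWithin_le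
      (f := s) (f' := fun h => f (s h)) (s := Set.Icc (0 : ℝ) 1) (C := M)
      (fun x hx => (hs x hx).hasDerivWithinAt)
      (fun x hx => by simpa [Real.norm_eq_abs] using hMb x hx)
      (convex_Icc 0 1) hv hu
    simpa [Real.norm_eq_abs] using this
  intro k
  induction k with
  | zero => intro _; simp [eulerSeq, hs0]
  | succ k ih =>
    intro hk
    have hkN : k ≤ N := Nat.le_of_succ_le hk
    have ih' := ih hkN
    set c := eulerSeq f (1 / N) k with hc
    set t0 : ℝ := k / N with ht0
    set t1 : ℝ := (k + 1 : ℕ) / N with ht1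
    have ht1' : t1 = t0 + 1 / N := by rw [ht1, ht0]; push_cast; ring
    have ht0mem : t0 ∈ Set.Icc (0 : ℝ) 1 := by
      constructor
      · positivity
      · rw [ht0, div_le_one hNpos]; exact_mod_cast hkN
    have ht1mem : t1 ∈ Set.Icc (0 : ℝ) 1 := by
      constructor
      · positivity
      · rw [ht1, div_le_one hNpos]; exact_mod_cast hk
    have hsub : Set.Icc t0 t1 ⊆ Set.Icc (0 : ℝ) 1 := by
      intro u hu
      exact ⟨le_trans ht0mem.1 hu.1, le_trans hu.2 ht1mem.2⟩
    -- one-step consistency bound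
    have hstep : |s t1 - s t0 - (1 / N) * f (s t0)| ≤ L * M / (N : ℝ) ^ 2 := by
      have hder : ∀ u ∈ Set.Icc t0 t1,
          HasDerivWithinAt (fun u => s u - u * f (s t0)) (f (s u) - f (s t0))
            (Set.Icc t0 t1) u := by
        intro u hu
        exact ((hs u (hsub hu)).sub (hasDerivAt_mul_const (f (s t0)))).hasDerivWithinAt
      have hbd : ∀ u ∈ Set.Icc t0 t1, ‖f (s u) - f (s t0)‖ ≤ L * M / N := by
        intro u hu
        have h1 : |f (s u) - f (s t0)| ≤ L * |s u - s t0| := hf _ _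
        have h2 : |s u - s t0| ≤ M * |u - t0| := hsLip u (hsub hu) t0 ht0mem
        have h3 : |u - t0| ≤ 1 / N := by
          rw [abs_of_nonneg (by linarith [hu.1])]
          have := hu.2
          rw [ht1'] at this
          linarith
        have h4 : M * |u - t0| ≤ M * (1 / N) := by
          exact mul_le_mul_of_nonneg_left h3 hM
        rw [Real.norm_eq_abs]
        calc |f (s u) - f (s t0)| ≤ L * |s u - s t0| := h1
          _ ≤ L * (M * (1 / N)) := mul_le_mul_of_nonneg_left (h2.trans h4) hL
          _ = L * M / N := by ring
      have := Convex.norm_image_sub_le_of_norm_hasDerivWithin_le hder hbd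
        (convex_Icc t0 t1)
        (Set.left_mem_Icc.2 (by rw [ht1']; exact le_add_of_nonneg_right (by positivity)))
        (Set.right_mem_Icc.2 (by rw [ht1']; exact le_add_of_nonneg_right (by positivity)))
      rw [Real.norm_eq_abs, Real.norm_eq_abs, abs_of_nonneg (by rw [ht1']; ring_nf; positivity : (0:ℝ) ≤ t1 - t0)] at this
      have heq : s t1 - t1 * f (s t0) - (s t0 - t0 * f (s t0))
          = s t1 - s t0 - (1 / N) * f (s t0) := by rw [ht1']; ring
      rw [heq] at this
      calc |s t1 - s t0 - (1 / N) * f (s t0)| ≤ L * M / N * (t1 - t0) := this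
        _ = L * M / (N : ℝ) ^ 2 := by rw [ht1']; field_simp; ring
    -- recursion
    have hrec : eulerSeq f (1 / N) (k + 1) - s t1
        = (c - s t0) + (1 / N) * (f c - f (s t0))
          - (s t1 - s t0 - (1 / N) * f (s t0)) := by
      show c + (1 / N) * f c - s t1 = _
      ring
    have habs : |eulerSeq f (1 / N) (k + 1) - s t1|
        ≤ |c - s t0| * (1 + L / N) + L * M / (N : ℝ) ^ 2 := by
      rw [hrec]
      calc |(c - s t0) + (1 / N) * (f c - f (s t0)) - (s t1 - s t0 - (1 / N) * f (s t0))|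
          ≤ |(c - s t0) + (1 / N) * (f c - f (s t0))| + |s t1 - s t0 - (1 / N) * f (s t0)| :=
            abs_sub _ _
        _ ≤ |c - s t0| + (1 / N) * |f c - f (s t0)| + (L * M / (N : ℝ) ^ 2) := by
            have := abs_add_le (c - s t0) ((1 / N) * (f c - f (s t0)))
            rw [abs_mul, abs_of_nonneg (by positivity : (0:ℝ) ≤ 1 / (N:ℝ))] at this
            linarith
        _ ≤ |c - s t0| * (1 + L / N) + L * M / (N : ℝ) ^ 2 := by
            have h1 : |f c - f (s t0)| ≤ L * |c - s t0| := hf _ _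
            have h2 : (1 / (N:ℝ)) * |f c - f (s t0)| ≤ (1 / N) * (L * |c - s t0|) :=
              mul_le_mul_of_nonneg_left h1 (by positivity)
            have h3 : 1 / (N:ℝ) * (L * |c - s t0|) = |c - s t0| * (L / N) := by ring
            have h4 : |c - s t0| * (1 + L / N) = |c - s t0| + |c - s t0| * (L / N) := by ring
            linarith
    -- combine with IH
    have hr1 : (1 : ℝ) ≤ 1 + L / N := by
      have : (0:ℝ) ≤ L / N := by positivity
      linarith
    have hP1 : (1 : ℝ) ≤ (1 + L / N) ^ k := one_le_pow₀ hr1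
    have hD : (0 : ℝ) ≤ L * M / (N : ℝ) ^ 2 := by positivity
    have hfinal : |eulerSeq f (1 / N) (k + 1) - s t1|
        ≤ (k + 1 : ℝ) * (L * M / (N : ℝ) ^ 2) * (1 + L / N) ^ (k + 1) := by
      have h1 : |c - s t0| * (1 + L / N)
          ≤ (k : ℝ) * (L * M / (N : ℝ) ^ 2) * (1 + L / N) ^ k * (1 + L / N) :=
        mul_le_mul_of_nonneg_right ih' (by linarith)
      have h12 : (1:ℝ) ≤ (1 + L / N) ^ k * (1 + L / N) := by
        nlinarith [mul_le_mul hP1 hr1 zero_le_one (le_trans zero_le_one hP1)]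
      have h2 : L * M / (N : ℝ) ^ 2 ≤ (L * M / (N : ℝ) ^ 2) * ((1 + L / N) ^ k * (1 + L / N)) := by
        nlinarith [mul_le_mul_of_nonneg_left h12 hD]
      have hkn : (0:ℝ) ≤ (k : ℝ) := Nat.cast_nonneg k
      calc |eulerSeq f (1 / N) (k + 1) - s t1|
          ≤ |c - s t0| * (1 + L / N) + L * M / (N : ℝ) ^ 2 := habs
        _ ≤ (k + 1 : ℝ) * (L * M / (N : ℝ) ^ 2) * ((1 + L / N) ^ k * (1 + L / N)) := by
            nlinarith
        _ = (k + 1 : ℝ) * (L * M / (N : ℝ) ^ 2) * (1 + L / N) ^ (k + 1) := by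
            rw [pow_succ ((1:ℝ) + L / N) k]
    push_cast
    exact hfinal

/-- The IWA update as a limit of `N` gradient steps with learning rate `η/N`
(Theorem 1 of Karampatziakis & Langford, 2011): the iterates
`x_{k+1}^{(N)} = x_k^{(N)} - (η/N) ℓ̂'(⟨q, x_k^{(N)}⟩) q`, started at `x_t`,
converge (as `N → ∞`, after `N` steps) to `x_t - s(1) q`, where `s` is the
solution of `s(0) = 0`, `s'(h) = η ℓ̂'(⟨q, x_t - s(h) q⟩)`. -/
theorem iwa_update_limit_of_gradient_steps
    (d : ℕ) (q : EuclideanSpace ℝ (Fin d)) (η : ℝ) (hη : 0 < η)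
    (xt : EuclideanSpace ℝ (Fin d))
    (l : ℝ → ℝ) (hl : ContDiff ℝ 1 l)
    (K : NNReal) (hlip : LipschitzWith K (deriv l))
    (s : ℝ → ℝ) (hs0 : s 0 = 0)
    (hsODE : ∀ h ∈ Set.Icc (0 : ℝ) 1,
      HasDerivAt s (η * deriv l ⟪q, xt - s h • q⟫) h)
    (X : ℕ → ℕ → EuclideanSpace ℝ (Fin d))
    (hX0 : ∀ N, X N 0 = xt)
    (hXrec : ∀ N k, X N (k + 1) = X N k - (η / (N : ℝ) * deriv l ⟪q, X N k⟫) • q) :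
    Filter.Tendsto (fun N => X N N) Filter.atTop (nhds (xt - s 1 • q)) := by
  set a : ℝ := ⟪q, xt⟫ with ha
  set b : ℝ := ‖q‖ ^ 2 with hb
  have hb0 : 0 ≤ b := by positivity
  set f : ℝ → ℝ := fun c => η * deriv l (a - c * b) with hfdef
  have hip : ∀ c : ℝ, ⟪q, xt - c • q⟫ = a - c * b := by
    intro c
    rw [inner_sub_right, real_inner_smul_right, ha, hb, real_inner_self_eq_norm_sq]
  set L : ℝ := η * K * b with hLdef
  have hL : 0 ≤ L := by positivity
  have hf : ∀ x y : ℝ, |f x - f y| ≤ L * |x - y| := by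
    intro x y
    have h1 := hlip.dist_le_mul (a - x * b) (a - y * b)
    rw [Real.dist_eq, Real.dist_eq] at h1
    have h2 : |a - x * b - (a - y * b)| = b * |x - y| := by
      rw [show a - x * b - (a - y * b) = b * (y - x) by ring, abs_mul,
        abs_of_nonneg hb0, abs_sub_comm]
    calc |f x - f y| = η * |deriv l (a - x * b) - deriv l (a - y * b)| := by
          rw [hfdef]; simp [← mul_sub, abs_mul, abs_of_pos hη]
      _ ≤ η * (K * (b * |x - y|)) := by
          apply mul_le_mul_of_nonneg_left _ hη.le
          rw [← h2]; exact h1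
      _ = L * |x - y| := by rw [hLdef]; ring
  have hs' : ∀ h ∈ Set.Icc (0 : ℝ) 1, HasDerivAt s (f (s h)) h := by
    intro h hh
    have := hsODE h hh
    rwa [hip (s h)] at this
  -- continuity and the bound M
  have hfs_cont : ContinuousOn (fun h => f (s h)) (Set.Icc (0 : ℝ) 1) := by
    have hscont : ContinuousOn s (Set.Icc (0 : ℝ) 1) := fun h hh =>
      (hs' h hh).continuousAt.continuousWithinAt
    have hfcont : Continuous f := by
      apply continuous_const.mul
      exact hlip.continuous.comp (by continuity)
    exact hfcont.comp_continuousOn hscont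
  obtain ⟨M0, hM0⟩ := isCompact_Icc.exists_bound_of_continuousOn hfs_cont
  set M : ℝ := max M0 0 with hMdef
  have hM : 0 ≤ M := le_max_right _ _
  have hMb : ∀ h ∈ Set.Icc (0 : ℝ) 1, |f (s h)| ≤ M := by
    intro h hh
    exact le_trans (by simpa [Real.norm_eq_abs] using hM0 h hh) (le_max_left _ _)
  -- the iterates in terms of the Euler sequence
  have hXc : ∀ N k : ℕ, X N k = xt - eulerSeq f (1 / N) k • q := by
    intro N k
    induction k with
    | zero => simp [eulerSeq, hX0]
    | succ k ih =>
      rw [hXrec, ih, sub_sub, ← add_smul]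
      congr 2
      rw [hip]
      show eulerSeq f (1 / N) k + η / N * deriv l (a - eulerSeq f (1 / N) k * b) =
        eulerSeq f (1 / N) k + 1 / N * f (eulerSeq f (1 / N) k)
      rw [hfdef]; ring
  -- convergence of the Euler sequence to s 1
  have hconv : Filter.Tendsto (fun N : ℕ => eulerSeq f (1 / N) N)
      Filter.atTop (nhds (s 1)) := by
    rw [tendsto_iff_dist_tendsto_zero]
    apply squeeze_zero' (Filter.Eventually.of_forall fun N => dist_nonneg)
      (g := fun N : ℕ => L * M * Real.exp L / N)
    · filter_upwards [Filter.eventually_ge_atTop 1] with N hN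
      have hNpos : (0 : ℝ) < N := by exact_mod_cast hN
      have key := euler_error f L M hL hM hf s hs0 hs' hMb N hN N le_rfl
      rw [show ((N : ℝ) / N) = 1 by field_simp] at key
      have hexp : (1 + L / N) ^ N ≤ Real.exp L := by
        have h1 : (1 : ℝ) + L / N ≤ Real.exp (L / N) := by
          have := Real.add_one_le_exp (L / N)
          linarith
        calc (1 + L / N) ^ N ≤ Real.exp (L / N) ^ N :=
              pow_le_pow_left₀ (by positivity) h1 N
          _ = Real.exp (L / N * N) := by rw [← Real.exp_nat_mul]; ring_nf
          _ = Real.exp L := by congr 1; field_simp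
      rw [Real.dist_eq]
      calc |eulerSeq f (1 / N) N - s 1|
          ≤ N * (L * M / (N : ℝ) ^ 2) * (1 + L / N) ^ N := key
        _ ≤ N * (L * M / (N : ℝ) ^ 2) * Real.exp L := by
            apply mul_le_mul_of_nonneg_left hexp (by positivity)
        _ = L * M * Real.exp L / N := by field_simp
    · exact tendsto_const_div_atTop_nhds_zero_nat _
  -- conclude
  have : Filter.Tendsto (fun N : ℕ => xt - eulerSeq f (1 / N) N • q)
      Filter.atTop (nhds (xt - s 1 • q)) :=
    Filter.Tendsto.sub tendsto_const_nhds (hconv.smul_const q)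
  exact this.congr fun N => (hXc N N).symm
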